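/- Let Ω = {1,...,k} with uniform prior p, u_s(q) = ‖q‖_∞, and for 1 ≤ i ≤ m = k−1 the constraint functions f_i(q) = q(i) with thresholds c_i = 1/k. Then: (a) the only Bayes-plausible scheme satisfying all m ex post constraints is the point mass on p, giving Sender utility 1/k; (b) full revelation satisfies all m ex ante constraints and gives Sender utility 1. Hence the ex-ante-vs-ex-post multiplicative gap is k = m+1. -/

import Mathlib

open MeasureTheory

lemma integrable_dirac'' {α E : Type*} [MeasurableSpace α] [MeasurableSingletonClass α]
    [NormedAddCommGroup E] (f : α → E) (a : α) : Integrable f (Measure.dirac a) := by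
  refine (integrable_const (f a)).congr ?_
  rw [MeasureTheory.ae_dirac_eq]
  exact Filter.eventually_pure.2 rfl

theorem stmt11 (k : ℕ) (hk : 0 < k) :
    let fullRev : Measure (Fin k → ℝ) :=
      (k : ENNReal)⁻¹ • ∑ i : Fin k, Measure.dirac (fun j => if j = i then (1 : ℝ) else 0);
    (∀ P : Measure (Fin k → ℝ), IsProbabilityMeasure P →
      (∀ᵐ q ∂P, q ∈ stdSimplex ℝ (Fin k)) →
      (∀ i : Fin k, (∫ q, q i ∂P) = 1 / (k:ℝ)) →
      (∀ i : Fin k, (i : ℕ) < k - 1 → ∀ᵐ q ∂P, q i ≤ 1 / (k:ℝ)) →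
      P = Measure.dirac (fun _ => 1 / (k : ℝ)) ∧ (∫ q, ‖q‖ ∂P) = 1 / (k:ℝ)) ∧
    IsProbabilityMeasure fullRev ∧
    (∀ i : Fin k, (∫ q, q i ∂fullRev) = 1 / (k:ℝ)) ∧
    (∫ q, ‖q‖ ∂fullRev) = 1 := by
  intro fullRev
  have hk' : (k : ℝ) ≠ 0 := Nat.cast_ne_zero.2 hk.ne'
  haveI : Nonempty (Fin k) := ⟨⟨0, hk⟩⟩
  -- a helper for integrals against fullRev
  have key : ∀ f : (Fin k → ℝ) → ℝ,
      ∫ q, f q ∂fullRev = (k:ℝ)⁻¹ * ∑ i : Fin k, f (fun j => if j = i then 1 else 0) := by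
    intro f
    show ∫ q, f q ∂((k : ENNReal)⁻¹ • ∑ i : Fin k, Measure.dirac _) = _
    rw [integral_smul_measure,
      integral_finset_sum_measure (fun i _ => integrable_dirac'' f _)]
    simp only [integral_dirac, smul_eq_mul]
    congr 1
    simp [ENNReal.toReal_inv]
  refine ⟨?_, ?_, ?_, ?_⟩
  · -- part (a)
    intro P hP hsupp hmean hpost
    have hlt : ∀ i : Fin k, (i : ℕ) < k - 1 → ∀ᵐ q ∂P, q i = 1 / (k:ℝ) := by
      intro i hi
      have hint : Integrable (fun q : Fin k → ℝ => q i) P := by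
        refine Integrable.mono' (integrable_const 1)
          (measurable_pi_apply i).aestronglyMeasurable ?_
        filter_upwards [hsupp] with q hq
        rw [Real.norm_eq_abs, abs_of_nonneg (hq.1 i)]
        calc q i ≤ ∑ j, q j := Finset.single_le_sum (fun j _ => hq.1 j) (Finset.mem_univ i)
        _ = 1 := hq.2
      have h0 : 0 ≤ᵐ[P] fun q => 1 / (k:ℝ) - q i := by
        filter_upwards [hpost i hi] with q hq
        simp only [Pi.zero_apply]; linarith
      have hint' : Integrable (fun q : Fin k → ℝ => 1 / (k:ℝ) - q i) P :=
        (integrable_const _).sub hint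
      have hz : ∫ q, (1 / (k:ℝ) - q i) ∂P = 0 := by
        rw [integral_sub (integrable_const _) hint, hmean i, integral_const]
        simp
      have := (integral_eq_zero_iff_of_nonneg_ae h0 hint').1 hz
      filter_upwards [this] with q hq
      have : 1 / (k:ℝ) - q i = 0 := hq
      linarith
    have hall : ∀ᵐ q ∂P, q = fun _ => 1 / (k:ℝ) := by
      have h1 : ∀ᵐ q ∂P, ∀ i : Fin k, (i : ℕ) < k - 1 → q i = 1 / (k:ℝ) := by
        rw [MeasureTheory.ae_all_iff]
        intro i
        by_cases hi : (i : ℕ) < k - 1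
        · filter_upwards [hlt i hi] with q hq _; exact hq
        · filter_upwards with q h; exact absurd h hi
      filter_upwards [h1, hsupp] with q hq hsim
      funext i
      by_cases hi : (i : ℕ) < k - 1
      · exact hq i hi
      · have hival : (i : ℕ) = k - 1 :=
          le_antisymm (Nat.le_pred_of_lt i.isLt) (le_of_not_gt hi)
        have hsum := hsim.2
        rw [← Finset.add_sum_erase _ _ (Finset.mem_univ i)] at hsum
        have herase : ∑ j ∈ Finset.univ.erase i, q j = (k - 1 : ℝ) * (1 / (k:ℝ)) := by
          have hval : ∀ j ∈ Finset.univ.erase i, q j = 1 / (k:ℝ) := by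
            intro j hj
            refine hq j ?_
            have hj' := Finset.ne_of_mem_erase hj
            rcases lt_or_eq_of_le (Nat.le_pred_of_lt j.isLt) with h | h
            · exact h
            · exact absurd (Fin.ext (h.trans hival.symm)) hj'
          rw [Finset.sum_congr rfl hval, Finset.sum_const,
            Finset.card_erase_of_mem (Finset.mem_univ i)]
          simp only [Finset.card_univ, Fintype.card_fin, nsmul_eq_mul]
          rw [Nat.cast_sub hk]
          norm_num
        rw [herase] at hsum
        have : q i = 1 - (k - 1 : ℝ) * (1 / (k:ℝ)) := by linarith
        rw [this]; field_simp; ring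
    have hPd : P = Measure.dirac (fun _ => 1 / (k:ℝ)) := by
      have h2 : P.map id = P.map (fun _ => (fun _ => 1 / (k:ℝ) : Fin k → ℝ)) :=
        Measure.map_congr hall
      rwa [Measure.map_id, Measure.map_const, hP.measure_univ, one_smul] at h2
    refine ⟨hPd, ?_⟩
    rw [hPd, integral_dirac]
    rw [pi_norm_const]
    rw [Real.norm_eq_abs, abs_of_nonneg (by positivity)]
  · -- fullRev is a probability measure
    constructor
    show ((k : ENNReal)⁻¹ • ∑ i : Fin k, Measure.dirac _) Set.univ = 1
    simp only [Measure.smul_apply, Measure.coe_finset_sum, Finset.sum_apply,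
      Measure.dirac_apply' _ MeasurableSet.univ, Set.indicator_univ, Pi.one_apply,
      Finset.sum_const, Finset.card_univ, Fintype.card_fin, nsmul_eq_mul, mul_one,
      smul_eq_mul]
    exact ENNReal.inv_mul_cancel (Nat.cast_ne_zero.2 hk.ne') (ENNReal.natCast_ne_top k)
  · -- coordinate integrals
    intro i
    rw [key (fun q => q i)]
    simp only [Finset.sum_ite_eq, Finset.mem_univ, if_true]
    rw [mul_one, one_div]
  · -- norm integral
    rw [key (fun q => ‖q‖)]
    have hnorm : ∀ i : Fin k, ‖(fun j => if j = i then (1:ℝ) else 0)‖ = 1 := by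
      intro i
      refine le_antisymm ?_ ?_
      · refine pi_norm_le_iff_of_nonneg zero_le_one |>.2 fun j => ?_
        by_cases h : j = i <;> simp [h]
      · have := norm_le_pi_norm (fun j => if j = i then (1:ℝ) else 0) i
        simpa using this
    simp only [hnorm, Finset.sum_const, Finset.card_univ, Fintype.card_fin, nsmul_eq_mul,
      mul_one]
    exact inv_mul_cancel₀ hk'
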